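/- Let R be a regular domain of characteristic p and f, g ∈ R relatively prime elements, and let A, B be ideals with (A^{[p]} : g^{p−1}) = A and (B^{[p]} : f^{p−1}) = B. Then (f^p A^{[p]} + g^p B^{[p]} : f^{p−1} g^{p−1}) = fA + gB. -/
import Mathlib


/-- The `q`-th Frobenius power `I^{[q]}` of an ideal: the ideal generated by `q`-th powers
of elements of `I`. -/
def frobPow {R : Type*} [CommRing R] (I : Ideal R) (q : ℕ) : Ideal R :=
  Ideal.span ((fun x => x ^ q) '' (I : Set R))

/-- In a UFD of characteristic `p`, for relatively prime `f, g` and ideals `A, B` with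
`(A^{[p]} : g^{p−1}) = A` and `(B^{[p]} : f^{p−1}) = B`, one has
`(f^p A^{[p]} + g^p B^{[p]} : f^{p−1} g^{p−1}) = fA + gB`. -/
theorem stmt14 {R : Type*} [CommRing R] [IsDomain R] [UniqueFactorizationMonoid R]
    (p : ℕ) [Fact p.Prime] [CharP R p]
    (f g : R) (hfg : IsRelPrime f g) (A B : Ideal R)
    (hA : (frobPow A p).colon (Ideal.span {g ^ (p - 1)}) = A)
    (hB : (frobPow B p).colon (Ideal.span {f ^ (p - 1)}) = B) :
    (Ideal.span {f ^ p} * frobPow A p + Ideal.span {g ^ p} * frobPow B p).colon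
        (Ideal.span {f ^ (p - 1) * g ^ (p - 1)}) =
      Ideal.span {f} * A + Ideal.span {g} * B := by
  have hp2 : 2 ≤ p := (Fact.out : p.Prime).two_le
  obtain ⟨n, rfl⟩ : ∃ n, p = n + 1 := ⟨p - 1, by omega⟩
  have hn0 : n ≠ 0 := by omega
  simp only [Nat.add_sub_cancel] at hA hB ⊢
  by_cases hf0 : f = 0
  · -- g is a unit and B = ⊤, both sides are ⊤
    have hgu : IsUnit g := hfg (show g ∣ f by rw [hf0]; exact dvd_zero g) dvd_rfl
    have hBtop : B = ⊤ := by
      rw [← hB, Ideal.eq_top_iff_one, Ideal.mem_colon_span_singleton, hf0, zero_pow hn0, mul_zero]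
      exact zero_mem _
    have hl : (Ideal.span {f ^ (n+1)} * frobPow A (n+1)
        + Ideal.span {g ^ (n+1)} * frobPow B (n+1)).colon
        (Ideal.span {f ^ n * g ^ n}) = ⊤ := by
      rw [Ideal.eq_top_iff_one, Ideal.mem_colon_span_singleton, hf0, zero_pow hn0, zero_mul,
        mul_zero]
      exact zero_mem _
    rw [hl]
    symm
    rw [Ideal.eq_top_iff_one]
    apply Submodule.mem_sup_right
    rw [Ideal.mem_span_singleton_mul]
    exact ⟨↑hgu.unit⁻¹, hBtop ▸ Submodule.mem_top,
      hgu.mul_val_inv⟩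
  by_cases hg0 : g = 0
  · have hfu : IsUnit f := hfg dvd_rfl (show f ∣ g by rw [hg0]; exact dvd_zero f)
    have hAtop : A = ⊤ := by
      rw [← hA, Ideal.eq_top_iff_one, Ideal.mem_colon_span_singleton, hg0, zero_pow hn0, mul_zero]
      exact zero_mem _
    have hl : (Ideal.span {f ^ (n+1)} * frobPow A (n+1)
        + Ideal.span {g ^ (n+1)} * frobPow B (n+1)).colon
        (Ideal.span {f ^ n * g ^ n}) = ⊤ := by
      rw [Ideal.eq_top_iff_one, Ideal.mem_colon_span_singleton, hg0, zero_pow hn0, mul_zero,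
        mul_zero]
      exact zero_mem _
    rw [hl]
    symm
    rw [Ideal.eq_top_iff_one]
    apply Submodule.mem_sup_left
    rw [Ideal.mem_span_singleton_mul]
    exact ⟨↑hfu.unit⁻¹, hAtop ▸ Submodule.mem_top,
      hfu.mul_val_inv⟩
  -- main case
  apply le_antisymm
  · intro h hh
    rw [Ideal.mem_colon_span_singleton] at hh
    obtain ⟨x, hx, y, hy, hxy⟩ := Submodule.mem_sup.mp hh
    obtain ⟨v, hv, rfl⟩ := Ideal.mem_span_singleton_mul.mp hx
    obtain ⟨w, hw, rfl⟩ := Ideal.mem_span_singleton_mul.mp hy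
    -- hxy : f^(n+1) * v + g^(n+1) * w = h * (f^n * g^n)
    have hdvdw : f ^ n ∣ w := by
      have h1 : f ^ n ∣ g ^ (n+1) * w := by
        have he : g ^ (n+1) * w = f ^ n * (g ^ n * h) - f ^ n * (f * v) := by
          linear_combination hxy
        rw [he]
        exact dvd_sub (Dvd.intro _ rfl) (Dvd.intro _ rfl)
      exact (hfg.pow (m := n) (n := n+1)).dvd_of_dvd_mul_left h1
    have hdvdv : g ^ n ∣ v := by
      have h1 : g ^ n ∣ f ^ (n+1) * v := by
        have he : f ^ (n+1) * v = g ^ n * (f ^ n * h) - g ^ n * (g * w) := by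
          linear_combination hxy
        rw [he]
        exact dvd_sub (Dvd.intro _ rfl) (Dvd.intro _ rfl)
      exact (hfg.symm.pow (m := n) (n := n+1)).dvd_of_dvd_mul_left h1
    obtain ⟨v', hv'⟩ := hdvdv
    obtain ⟨w', hw'⟩ := hdvdw
    have hkey : h = f * v' + g * w' := by
      have hne : f ^ n * g ^ n ≠ 0 := mul_ne_zero (pow_ne_zero _ hf0) (pow_ne_zero _ hg0)
      apply mul_left_cancel₀ hne
      linear_combination -hxy + f ^ (n+1) * hv' + g ^ (n+1) * hw'
    have hv'A : v' ∈ A := by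
      rw [← hA, Ideal.mem_colon_span_singleton,
        show v' * g ^ n = v by rw [hv']; ring]
      exact hv
    have hw'B : w' ∈ B := by
      rw [← hB, Ideal.mem_colon_span_singleton,
        show w' * f ^ n = w by rw [hw']; ring]
      exact hw
    rw [hkey]
    exact Submodule.add_mem_sup (Ideal.mem_span_singleton_mul.mpr ⟨v', hv'A, rfl⟩)
      (Ideal.mem_span_singleton_mul.mpr ⟨w', hw'B, rfl⟩)
  · apply sup_le
    · rw [Ideal.mul_le]
      intro r hr a ha
      obtain ⟨c, rfl⟩ := Ideal.mem_span_singleton.mp hr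
      rw [Ideal.mem_colon_span_singleton]
      have haA : g ^ n * a ∈ frobPow A (n+1) := by
        have := hA ▸ ha
        rw [Ideal.mem_colon_span_singleton] at this
        rwa [mul_comm]
      apply Submodule.mem_sup_left
      rw [show f * c * a * (f ^ n * g ^ n) = c * (f ^ (n+1) * (g ^ n * a)) by ring]
      exact Ideal.mul_mem_left _ c (Ideal.mem_span_singleton_mul.mpr ⟨_, haA, rfl⟩)
    · rw [Ideal.mul_le]
      intro r hr b hb
      obtain ⟨c, rfl⟩ := Ideal.mem_span_singleton.mp hr
      rw [Ideal.mem_colon_span_singleton]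
      have hbB : f ^ n * b ∈ frobPow B (n+1) := by
        have := hB ▸ hb
        rw [Ideal.mem_colon_span_singleton] at this
        rwa [mul_comm]
      apply Submodule.mem_sup_right
      rw [show g * c * b * (f ^ n * g ^ n) = c * (g ^ (n+1) * (f ^ n * b)) by ring]
      exact Ideal.mul_mem_left _ c (Ideal.mem_span_singleton_mul.mpr ⟨_, hbB, rfl⟩)
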